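/- Let C be a triangulated category and X a Σ-stable full additive subcategory closed under direct summands. If X is contravariantly finite in C, then C has enough ξ_X-projectives and X = P(ξ_X). In particular, if P ∈ P(ξ_X), then any triangle K → X' → P → ΣK in ξ_X with X' ∈ X is split, so P is a direct summand of an object of X and hence P ∈ X. -/

import Mathlib

open CategoryTheory CategoryTheory.Limits CategoryTheory.Pretriangulated

variable {C : Type*} [Category C] [Preadditive C] [HasZeroObject C] [HasShift C ℤ]
  [∀ n : ℤ, (shiftFunctor C n).Additive] [Pretriangulated C] [HasBinaryBiproducts C]

/-- The class of `Hom(X,-)`-exact distinguished triangles. -/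
def xiX (X : Set C) : Set (Triangle C) :=
  {T | T ∈ (distTriang C) ∧
    ∀ X' ∈ X, Function.Surjective (fun u : X' ⟶ T.obj₂ => u ≫ T.mor₂)}

/-- An object `P` is `ξ`-projective if `Hom(P, -)` sends every triangle in `ξ` to a
short exact sequence of abelian groups. -/
def IsXiProjective (ξ : Set (Triangle C)) (P : C) : Prop :=
  ∀ T ∈ ξ,
    Function.Injective (fun u : P ⟶ T.obj₁ => u ≫ T.mor₁) ∧
    (∀ v : P ⟶ T.obj₁, (v ≫ T.mor₁) ≫ T.mor₂ = 0) ∧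
    (∀ u : P ⟶ T.obj₂, u ≫ T.mor₂ = 0 → ∃ v : P ⟶ T.obj₁, v ≫ T.mor₁ = u) ∧
    Function.Surjective (fun u : P ⟶ T.obj₂ => u ≫ T.mor₂)

omit [HasBinaryBiproducts C] in
lemma isXiProjective_of_mem (X : Set C)
    (hshift : ∀ A : C, A ∈ X ↔ (A⟦(1 : ℤ)⟧) ∈ X)
    {P : C} (hP : P ∈ X) : IsXiProjective (xiX X) P := by
  intro T hT
  obtain ⟨hdT, hsurj⟩ := hT
  refine ⟨?_, ?_, ?_, hsurj P hP⟩
  · intro a b hab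
    simp only at hab
    have hv : (a - b) ≫ T.mor₁ = 0 := by
      rw [Preadditive.sub_comp, hab, sub_self]
    have hv1 : ((a - b)⟦(1 : ℤ)⟧') ≫ T.mor₁⟦(1 : ℤ)⟧' = 0 := by
      rw [← Functor.map_comp, hv, Functor.map_zero]
    obtain ⟨g, hg⟩ := Triangle.coyoneda_exact₁ T hdT ((a - b)⟦(1 : ℤ)⟧') hv1
    obtain ⟨u, hu⟩ := hsurj (P⟦(1 : ℤ)⟧) ((hshift P).mp hP) g
    simp only at hu
    have : (a - b)⟦(1 : ℤ)⟧' = 0 := by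
      rw [hg, ← hu, Category.assoc, comp_distTriang_mor_zero₂₃ T hdT, comp_zero]
    have h0 : a - b = 0 := by
      apply (shiftFunctor C (1 : ℤ)).map_injective
      rw [this, Functor.map_zero]
    exact sub_eq_zero.mp h0
  · intro v
    rw [Category.assoc, comp_distTriang_mor_zero₁₂ T hdT, comp_zero]
  · intro u hu
    obtain ⟨v, hv⟩ := Triangle.coyoneda_exact₂ T hdT u hu
    exact ⟨v, hv.symm⟩

theorem stmt_11 (X : Set C)
    (hzero : ∀ Z : C, IsZero Z → Z ∈ X)
    (hadd : ∀ A B : C, A ∈ X → B ∈ X → (A ⊞ B) ∈ X)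
    (hshift : ∀ A : C, A ∈ X ↔ (A⟦(1 : ℤ)⟧) ∈ X)
    (hsummand : ∀ (P Q : C), Q ∈ X → ∀ (s : P ⟶ Q) (r : Q ⟶ P), s ≫ r = 𝟙 P → P ∈ X)
    (hcf : ∀ Z : C, ∃ X' ∈ X, ∃ f : X' ⟶ Z,
      ∀ X'' ∈ X, ∀ u : X'' ⟶ Z, ∃ v : X'' ⟶ X', v ≫ f = u) :
    (∀ A : C, ∃ (K P : C) (f : K ⟶ P) (g : P ⟶ A) (h : A ⟶ K⟦(1 : ℤ)⟧),
      Triangle.mk f g h ∈ xiX X ∧ IsXiProjective (xiX X) P) ∧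
    (∀ P : C, IsXiProjective (xiX X) P ↔ P ∈ X) ∧
    (∀ P : C, IsXiProjective (xiX X) P →
      ∀ {K X' : C} (f : K ⟶ X') (g : X' ⟶ P) (h : P ⟶ K⟦(1 : ℤ)⟧),
        X' ∈ X → Triangle.mk f g h ∈ xiX X → h = 0) := by
  have key : ∀ A : C, ∃ (K X' : C) (_ : X' ∈ X) (f : K ⟶ X') (g : X' ⟶ A)
      (h : A ⟶ K⟦(1 : ℤ)⟧), Triangle.mk f g h ∈ xiX X := by
    intro A
    obtain ⟨X', hX', g, happrox⟩ := hcf A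
    obtain ⟨K, f, h, hT⟩ := distinguished_cocone_triangle₁ g
    refine ⟨K, X', hX', f, g, h, hT, ?_⟩
    intro X'' hX'' u
    obtain ⟨v, hv⟩ := happrox X'' hX'' u
    exact ⟨v, hv⟩
  refine ⟨?_, ?_, ?_⟩
  · intro A
    obtain ⟨K, X', hX', f, g, h, hT⟩ := key A
    exact ⟨K, X', f, g, h, hT, isXiProjective_of_mem X hshift hX'⟩
  · intro P
    constructor
    · intro hPproj
      obtain ⟨K, X', hX', f, g, h, hT⟩ := key P
      obtain ⟨u, hu⟩ := (hPproj _ hT).2.2.2 (𝟙 P)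
      exact hsummand P X' hX' u g hu
    · exact fun hP => isXiProjective_of_mem X hshift hP
  · intro P hPproj K X' f g h hX' hT
    obtain ⟨u, hu⟩ := (hPproj _ hT).2.2.2 (𝟙 P)
    simp only at hu
    have hgh : g ≫ h = 0 := comp_distTriang_mor_zero₂₃ _ hT.1
    have hu' : u ≫ g = 𝟙 P := hu
    calc h = (u ≫ g) ≫ h := by rw [hu', Category.id_comp]
      _ = u ≫ (g ≫ h) := Category.assoc _ _ _
      _ = 0 := (congrArg (fun k => u ≫ k) hgh).trans comp_zero
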